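/- For every integer n ≥ 2 and every subset S ⊆ {1,…,n−1}, the generating polynomial of the statistic cro over the sequences in W̃_n whose dot set equals S satisfies Σ_{w ∈ W̃_n, Dot(w) = S} t^{cro(w)} = ψ_{S,n}(t). (In particular, if S contains two consecutive integers, there is no w ∈ W̃_n with Dot(w) = S and both sides are 0.) -/

import Mathlib

open Polynomial Finset

/-- `[m]_t = 1 + t + ⋯ + t^(m-1)`, with `[0]_t = 0`. -/
noncomputable def qnum (m : ℕ) : Polynomial ℤ := ∑ i ∈ Finset.range m, X ^ i

/-- Given the previous value `prev` and a (sorted) list `s₁, …, s_ℓ`, the product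
`[s₁ - prev - 1]_t · [s₂ - s₁ - 1]_t ⋯ [s_ℓ - s_{ℓ-1} - 1]_t`. -/
noncomputable def gapProd : ℕ → List ℕ → Polynomial ℤ
  | _, [] => 1
  | prev, s :: rest => qnum (s - prev - 1) * gapProd s rest

/-- For a sorted list `s₁, …, s_ℓ`, the product
`[s₁]_t · [s₂ - s₁ - 1]_t ⋯ [s_ℓ - s_{ℓ-1} - 1]_t`. -/
noncomputable def psiProd : List ℕ → Polynomial ℤ
  | [] => 1
  | s :: rest => qnum s * gapProd s rest

/-- `S` contains no two consecutive integers. -/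
def NoTwoConsec (S : Finset ℕ) : Prop := ∀ i ∈ S, i + 1 ∉ S

instance (S : Finset ℕ) : Decidable (NoTwoConsec S) :=
  inferInstanceAs (Decidable (∀ i ∈ S, i + 1 ∉ S))

/-- The polynomial `ψ_{S,n}(t) ∈ ℤ[t]`. -/
noncomputable def psi (n : ℕ) (S : Finset ℕ) : Polynomial ℤ :=
  if S ⊆ Finset.Icc 1 (n - 1) ∧ NoTwoConsec S then
    if S = ∅ then qnum (n + 1)
    else X ^ S.card * psiProd (S.sort (· ≤ ·)) *
      (if n - 1 ∈ S then 1 else qnum (n - S.sup id))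
  else 0

/-- The three symbols `•` (dot), `×` (cross), `␣` (blank). -/
inductive Mark : Type where
  | dot : Mark
  | cross : Mark
  | blank : Mark
  deriving DecidableEq

instance : Fintype Mark :=
  ⟨{Mark.dot, Mark.cross, Mark.blank}, fun x => by cases x <;> decide⟩

/-- The letter `w_i` (positions numbered `0, …, m-1`) of a sequence encoded as a
function `Fin m → Mark`; out-of-range positions read as blank. -/
def letterAt {m : ℕ} (w : Fin m → Mark) (i : ℕ) : Mark :=
  if h : i < m then w ⟨i, h⟩ else Mark.blank

/-- Membership in `W̃_n`: `w = w₀ w₁ … w_{n-1}` satisfies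
(i) if `w_i = •` then `i ≥ 1` and `w_{i-1} = ×`;
(ii) a cross in position `j ≤ n-2` is immediately followed by a cross or a dot. -/
def IsWt (n : ℕ) (w : Fin n → Mark) : Prop :=
  (∀ i, letterAt w i = Mark.dot → 1 ≤ i ∧ letterAt w (i - 1) = Mark.cross) ∧
  (∀ j, j ≤ n - 2 → letterAt w j = Mark.cross →
    letterAt w (j + 1) = Mark.cross ∨ letterAt w (j + 1) = Mark.dot)

/-- `Dot(w)`, the set of positions carrying a dot. -/
def DotSet (n : ℕ) (w : Fin n → Mark) : Finset ℕ :=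
  (Finset.range n).filter fun i => letterAt w i = Mark.dot

/-- `cro(w)`, the number of crosses. -/
def cro (n : ℕ) (w : Fin n → Mark) : ℕ :=
  ((Finset.range n).filter fun i => letterAt w i = Mark.cross).card


section Aux
lemma qnum_zero : qnum 0 = 0 := by simp [qnum]
lemma qnum_one : qnum 1 = 1 := by simp [qnum]
lemma qnum_succ (m : ℕ) : qnum (m+1) = qnum m + X ^ m := by simp [qnum, Finset.sum_range_succ]
lemma qnum_two : qnum 2 = 1 + X := by
  have : qnum 2 = qnum 1 + X ^ 1 := qnum_succ 1
  rw [this, qnum_one]; ring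
lemma qnum_rec (k : ℕ) : qnum (k+2) = (1 + X) * qnum (k+1) - X * qnum k := by
  have h : qnum (k+2) = qnum (k+1) + X ^ (k+1) := qnum_succ (k+1)
  rw [h, qnum_succ k]; ring

lemma sup_mem_of_nonempty {S : Finset ℕ} (h : S.Nonempty) : S.sup id ∈ S := by
  rw [← Finset.sup'_eq_sup h, ← Finset.max'_eq_sup' S h]
  exact S.max'_mem h

lemma psi_of_not {n : ℕ} {S : Finset ℕ} (h : ¬(S ⊆ Finset.Icc 1 (n - 1) ∧ NoTwoConsec S)) :
    psi n S = 0 := if_neg h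

lemma psi_empty (n : ℕ) : psi n ∅ = qnum (n + 1) := by
  simp [psi, NoTwoConsec]

lemma psi_closed {n : ℕ} {S : Finset ℕ} (hn : 1 ≤ n) (hne : S ≠ ∅)
    (hsub : S ⊆ Finset.Icc 1 (n - 1)) (hst : NoTwoConsec S) :
    psi n S = X ^ S.card * psiProd (S.sort (· ≤ ·)) * qnum (n - S.sup id) := by
  rw [psi, if_pos ⟨hsub, hst⟩, if_neg hne]
  by_cases h : n - 1 ∈ S
  · rw [if_pos h]
    have h1 : S.sup id ≤ n - 1 := Finset.sup_le fun x hx => by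
      simpa using (Finset.mem_Icc.1 (hsub hx)).2
    have h2 : n - 1 ≤ S.sup id := Finset.le_sup (f := id) h
    have : S.sup id = n - 1 := le_antisymm h1 h2
    rw [this, show n - (n-1) = 1 by omega, qnum_one]
  · rw [if_neg h]

-- list lemmas
lemma gapProd_append (x : ℕ) : ∀ (prev : ℕ) (l : List ℕ),
    gapProd prev (l ++ [x]) = gapProd prev l * qnum (x - l.getLastD prev - 1)
  | prev, [] => by simp [gapProd]
  | prev, s :: rest => by
      rw [List.cons_append, gapProd, gapProd_append x s rest, gapProd, List.getLastD_cons]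
      ring

lemma psiProd_append {l : List ℕ} (hl : l ≠ []) (x : ℕ) :
    psiProd (l ++ [x]) = psiProd l * qnum (x - l.getLastD 0 - 1) := by
  cases l with
  | nil => exact absurd rfl hl
  | cons s rest =>
      rw [List.cons_append, psiProd, gapProd_append, psiProd, List.getLastD_cons]
      ring

lemma sort_nil_iff {S : Finset ℕ} : S.sort (· ≤ ·) = [] ↔ S = ∅ := by
  rw [← List.length_eq_zero_iff, Finset.length_sort, Finset.card_eq_zero]

lemma sort_insert_max {T : Finset ℕ} {m : ℕ} (hlt : ∀ x ∈ T, x < m) (hmT : m ∉ T) :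
    (insert m T).sort (· ≤ ·) = T.sort (· ≤ ·) ++ [m] := by
  apply List.Perm.eq_of_pairwise' (Finset.pairwise_sort _ _) ?_ ?_
  · refine List.pairwise_append.2 ⟨Finset.pairwise_sort _ _, List.pairwise_singleton _ _, ?_⟩
    intro a ha b hb
    rw [List.mem_singleton] at hb
    subst hb
    exact (hlt a ((Finset.mem_sort _).1 ha)).le
  · exact ((Finset.sort_perm_toList (r := (· ≤ ·)) (s := insert m T)).trans
      ((Finset.toList_insert hmT).trans
        ((Finset.sort_perm_toList (r := (· ≤ ·)) (s := T)).symm.cons m))).trans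
      (List.perm_append_singleton m _).symm

lemma getLastD_sort_eq_sup {T : Finset ℕ} (h : T.Nonempty) :
    (T.sort (· ≤ ·)).getLastD 0 = T.sup id := by
  have hL : T.sort (· ≤ ·) ≠ [] := fun e => (Finset.nonempty_iff_ne_empty.1 h) (sort_nil_iff.1 e)
  rw [List.getLastD_eq_getLast?, List.getLast?_eq_getLast hL, Option.getD_some,
    List.getLast_eq_getElem]
  have hidx : (T.sort (· ≤ ·)).length - 1 < (T.sort (· ≤ ·)).length := by
    rw [Finset.length_sort]
    have := Finset.card_pos.2 h
    omega
  rw [Finset.sorted_last_eq_max' (h := hidx), Finset.max'_eq_sup', Finset.sup'_eq_sup]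

lemma NTC_subset {S T : Finset ℕ} (h : T ⊆ S) (hS : NoTwoConsec S) : NoTwoConsec T :=
  fun i hi hc => hS i (h hi) (h hc)

lemma psi_rec1 {m : ℕ} (hm : 2 ≤ m) {S : Finset ℕ} (hS : S ⊆ Finset.Icc 1 (m-2)) :
    psi (m+1) S = (1+X) * psi m S - X * psi (m-1) S := by
  by_cases hst : NoTwoConsec S
  · by_cases hne : S = ∅
    · subst hne
      rw [psi_empty, psi_empty, psi_empty, show m - 1 + 1 = m by omega]
      exact qnum_rec m
    · have hne' : S.Nonempty := Finset.nonempty_iff_ne_empty.2 hne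
      have hsup := sup_mem_of_nonempty hne'
      have hb := Finset.mem_Icc.1 (hS hsup)
      have hsub1 : S ⊆ Finset.Icc 1 ((m+1)-1) := fun x hx => by
        have := Finset.mem_Icc.1 (hS hx); rw [Finset.mem_Icc]; omega
      have hsub2 : S ⊆ Finset.Icc 1 (m-1) := fun x hx => by
        have := Finset.mem_Icc.1 (hS hx); rw [Finset.mem_Icc]; omega
      have hsub3 : S ⊆ Finset.Icc 1 ((m-1)-1) := fun x hx => by
        have := Finset.mem_Icc.1 (hS hx); rw [Finset.mem_Icc]; omega
      rw [psi_closed (by omega) hne hsub1 hst, psi_closed (by omega) hne hsub2 hst,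
        psi_closed (by omega) hne hsub3 hst]
      rw [show m + 1 - S.sup id = (m - 1 - S.sup id) + 2 by omega,
        show m - S.sup id = (m - 1 - S.sup id) + 1 by omega, qnum_rec]
      ring
  · rw [psi_of_not (fun h => hst h.2), psi_of_not (fun h => hst h.2),
      psi_of_not (fun h => hst h.2)]
    ring

lemma psi_rec2 {m : ℕ} (hm : 2 ≤ m) {S : Finset ℕ} (hmem : m - 1 ∈ S)
    (hsub : S ⊆ Finset.Icc 1 (m-1)) :
    psi (m+1) S = (1+X) * psi m S := by
  by_cases hst : NoTwoConsec S
  · have hne : S ≠ ∅ := by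
      intro h; rw [h] at hmem; exact absurd hmem (Finset.notMem_empty _)
    have hsub1 : S ⊆ Finset.Icc 1 ((m+1)-1) := fun x hx => by
      have := Finset.mem_Icc.1 (hsub hx); rw [Finset.mem_Icc]; omega
    have hsup_le : S.sup id ≤ m-1 := Finset.sup_le fun x hx => (Finset.mem_Icc.1 (hsub hx)).2
    have hsup : S.sup id = m - 1 := le_antisymm hsup_le (Finset.le_sup (f := id) hmem)
    rw [psi_closed (by omega) hne hsub1 hst, psi_closed (by omega) hne hsub hst, hsup,
      show m + 1 - (m-1) = 2 by omega, show m - (m-1) = 1 by omega, qnum_one, qnum_two]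
    ring
  · rw [psi_of_not (fun h => hst h.2), psi_of_not (fun h => hst h.2)]; ring

lemma psi_rec3 {m : ℕ} (hm : 2 ≤ m) {S : Finset ℕ} (hmem : m ∈ S) (hsub : S ⊆ Finset.Icc 1 m)
    (hnot : m - 1 ∉ S) : psi (m+1) S = X * psi (m-1) (S.erase m) := by
  by_cases hst : NoTwoConsec S
  · have hst' : NoTwoConsec (S.erase m) := NTC_subset (Finset.erase_subset _ _) hst
    have hsub1 : S ⊆ Finset.Icc 1 ((m+1)-1) := hsub
    by_cases hne' : S.erase m = ∅
    · have hSm : S = {m} := by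
        rcases (Finset.erase_eq_empty_iff S m).1 hne' with h | h
        · exact absurd hmem (by simp [h])
        · exact h
      rw [hSm, show ({m} : Finset ℕ).erase m = ∅ by simp, psi_empty,
        show m - 1 + 1 = m by omega]
      rw [psi, if_pos, if_neg (by simp)]
      · rw [if_pos (show (m+1)-1 ∈ ({m} : Finset ℕ) by simp), Finset.card_singleton,
          Finset.sort_singleton]
        show X^1 * psiProd [m] * 1 = X * qnum m
        rw [show psiProd [m] = qnum m * 1 from rfl]
        ring
      · constructor
        · intro x hx
          rw [Finset.mem_singleton] at hx; subst hx
          rw [Finset.mem_Icc]; omega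
        · intro i hi hc
          rw [Finset.mem_singleton] at hi hc; omega
    · have hne'' : (S.erase m).Nonempty := Finset.nonempty_iff_ne_empty.2 hne'
      have hne : S ≠ ∅ := by
        intro h; rw [h] at hmem; exact absurd hmem (Finset.notMem_empty _)
      have hsort : S.sort (· ≤ ·) = (S.erase m).sort (· ≤ ·) ++ [m] := by
        conv_lhs => rw [← Finset.insert_erase hmem]
        exact sort_insert_max (fun x hx => by
          have hx' := Finset.mem_erase.1 hx
          have := (Finset.mem_Icc.1 (hsub hx'.2)).2
          omega) (Finset.notMem_erase m S)
      have hcard : S.card = (S.erase m).card + 1 := by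
        have h1 := Finset.card_erase_of_mem hmem
        have h2 : 0 < S.card := Finset.card_pos.2 ⟨m, hmem⟩
        omega
      have hsub' : S.erase m ⊆ Finset.Icc 1 ((m-1)-1) := fun x hx => by
        have hx' := Finset.mem_erase.1 hx
        have := Finset.mem_Icc.1 (hsub hx'.2)
        have hxne : x ≠ m - 1 := fun e => hnot (e ▸ hx'.2)
        rw [Finset.mem_Icc]; omega
      have hsup' := _root_.sup_mem_of_nonempty hne''
      have hb := Finset.mem_Icc.1 (hsub' hsup')
      rw [psi, if_pos ⟨hsub1, hst⟩, if_neg hne, if_pos (show (m+1)-1 ∈ S from hmem)]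
      rw [psi_closed (by omega) hne' hsub' hst', hsort,
        psiProd_append (by rw [Ne, sort_nil_iff]; exact hne'),
        getLastD_sort_eq_sup hne'', hcard,
        show m - (S.erase m).sup id - 1 = m - 1 - (S.erase m).sup id by omega, pow_succ]
      ring
  · have hst' : ¬ NoTwoConsec (S.erase m) := by
      intro h
      apply hst
      intro i hi hc
      by_cases h1 : i + 1 = m
      · exact hnot (by rw [show m - 1 = i by omega]; exact hi)
      · by_cases h2 : i = m
        · have := (Finset.mem_Icc.1 (hsub hc)).2; omega
        · exact h i (Finset.mem_erase.2 ⟨h2, hi⟩) (Finset.mem_erase.2 ⟨h1, hc⟩)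
    rw [psi_of_not (fun h => hst h.2), psi_of_not (fun h => hst' h.2)]
    ring


-- ## combinatorial side

lemma letterAt_ge {m : ℕ} (w : Fin m → Mark) {i : ℕ} (h : m ≤ i) :
    letterAt w i = Mark.blank := dif_neg (by omega)

lemma letterAt_snoc {m : ℕ} (w' : Fin m → Mark) (a : Mark) (i : ℕ) :
    letterAt (Fin.snoc w' a : Fin (m+1) → Mark) i =
      if i < m then letterAt w' i else if i = m then a else Mark.blank := by
  unfold letterAt
  by_cases h1 : i < m
  · have h2 : i < m + 1 := by omega
    rw [dif_pos h2, if_pos h1, dif_pos h1]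
    have : (⟨i, h2⟩ : Fin (m+1)) = Fin.castSucc ⟨i, h1⟩ := rfl
    rw [this, Fin.snoc_castSucc]
  · by_cases h3 : i = m
    · subst h3
      rw [dif_pos (Nat.lt_succ_self i), if_neg h1, if_pos rfl]
      exact Fin.snoc_last (α := fun _ => Mark) a w'
    · rw [dif_neg (by omega), if_neg h1, if_neg h3]

lemma letterAt_snoc_last {m : ℕ} (w' : Fin m → Mark) (a : Mark) :
    letterAt (Fin.snoc w' a : Fin (m+1) → Mark) m = a := by
  rw [letterAt_snoc, if_neg (lt_irrefl m), if_pos rfl]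

lemma DotSet_snoc_dot {m : ℕ} (w' : Fin m → Mark) :
    DotSet (m+1) (Fin.snoc w' Mark.dot) = insert m (DotSet m w') := by
  ext i
  simp only [DotSet, Finset.mem_filter, Finset.mem_range, letterAt_snoc, Finset.mem_insert]
  constructor
  · rintro ⟨h1, h2⟩
    by_cases h : i < m
    · right; rw [if_pos h] at h2; exact ⟨h, h2⟩
    · left; omega
  · rintro (rfl | ⟨h, h2⟩)
    · exact ⟨by omega, by rw [if_neg (lt_irrefl i), if_pos rfl]⟩
    · exact ⟨by omega, by rw [if_pos h]; exact h2⟩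

lemma DotSet_snoc_of_ne {m : ℕ} (w' : Fin m → Mark) {a : Mark} (ha : a ≠ Mark.dot) :
    DotSet (m+1) (Fin.snoc w' a) = DotSet m w' := by
  ext i
  simp only [DotSet, Finset.mem_filter, Finset.mem_range, letterAt_snoc]
  constructor
  · rintro ⟨h1, h2⟩
    by_cases h : i < m
    · rw [if_pos h] at h2; exact ⟨h, h2⟩
    · exfalso
      rw [if_neg h] at h2
      by_cases h3 : i = m
      · rw [if_pos h3] at h2; exact ha h2
      · rw [if_neg h3] at h2; exact Mark.noConfusion h2
  · rintro ⟨h, h2⟩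
    exact ⟨by omega, by rw [if_pos h]; exact h2⟩

lemma cro_filter_congr {m : ℕ} (w' : Fin m → Mark) (a : Mark) :
    ((Finset.range m).filter fun i =>
        letterAt (Fin.snoc w' a : Fin (m+1) → Mark) i = Mark.cross) =
      ((Finset.range m).filter fun i => letterAt w' i = Mark.cross) := by
  apply Finset.filter_congr
  intro i hi
  rw [letterAt_snoc, if_pos (Finset.mem_range.1 hi)]

lemma cro_snoc_cross {m : ℕ} (w' : Fin m → Mark) :
    cro (m+1) (Fin.snoc w' Mark.cross) = cro m w' + 1 := by
  unfold cro
  rw [Finset.range_add_one, Finset.filter_insert, if_pos (letterAt_snoc_last w' Mark.cross),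
    cro_filter_congr]
  rw [Finset.card_insert_of_notMem (fun h => by
    have := Finset.mem_range.1 (Finset.mem_filter.1 h).1; omega)]

lemma cro_snoc_of_ne {m : ℕ} (w' : Fin m → Mark) {a : Mark} (ha : a ≠ Mark.cross) :
    cro (m+1) (Fin.snoc w' a) = cro m w' := by
  unfold cro
  rw [Finset.range_add_one, Finset.filter_insert,
    if_neg (by rw [letterAt_snoc_last]; exact ha), cro_filter_congr]

lemma isWt_snoc_cross {m : ℕ} (hm : 2 ≤ m) (w' : Fin m → Mark) :
    IsWt (m+1) (Fin.snoc w' Mark.cross) ↔ IsWt m w' := by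
  constructor
  · rintro ⟨h1, h2⟩
    constructor
    · intro i hd
      by_cases him : i < m
      · have hd' : letterAt (Fin.snoc w' Mark.cross : Fin (m+1) → Mark) i = Mark.dot := by
          rw [letterAt_snoc, if_pos him]; exact hd
        obtain ⟨hi1, hc⟩ := h1 i hd'
        refine ⟨hi1, ?_⟩
        rwa [letterAt_snoc, if_pos (by omega)] at hc
      · rw [letterAt_ge w' (by omega)] at hd; exact Mark.noConfusion hd
    · intro j hj hc
      have hj1 : j < m := by omega
      have hj2 : j + 1 < m := by omega
      have hc' : letterAt (Fin.snoc w' Mark.cross : Fin (m+1) → Mark) j = Mark.cross := by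
        rw [letterAt_snoc, if_pos hj1]; exact hc
      have := h2 j (by omega) hc'
      rwa [letterAt_snoc, if_pos hj2] at this
  · rintro ⟨h1, h2⟩
    constructor
    · intro i hd
      rw [letterAt_snoc] at hd
      by_cases h : i < m
      · rw [if_pos h] at hd
        obtain ⟨hi1, hc⟩ := h1 i hd
        exact ⟨hi1, by rw [letterAt_snoc, if_pos (by omega)]; exact hc⟩
      · rw [if_neg h] at hd
        by_cases h' : i = m
        · rw [if_pos h'] at hd; exact Mark.noConfusion hd
        · rw [if_neg h'] at hd; exact Mark.noConfusion hd
    · intro j hj hc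
      rw [letterAt_snoc] at hc
      by_cases hjm : j ≤ m - 2
      · rw [if_pos (by omega)] at hc
        have := h2 j hjm hc
        rw [letterAt_snoc, if_pos (by omega)]
        exact this
      · have hje : j + 1 = m := by omega
        left
        rw [letterAt_snoc, if_neg (by omega), if_pos hje]

lemma isWt_snoc_dot {m : ℕ} (hm : 2 ≤ m) (w' : Fin m → Mark) :
    IsWt (m+1) (Fin.snoc w' Mark.dot) ↔ IsWt m w' ∧ letterAt w' (m-1) = Mark.cross := by
  constructor
  · rintro ⟨h1, h2⟩
    have hd : letterAt (Fin.snoc w' Mark.dot : Fin (m+1) → Mark) m = Mark.dot :=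
      letterAt_snoc_last w' Mark.dot
    obtain ⟨_, hlast⟩ := h1 m hd
    rw [letterAt_snoc, if_pos (by omega)] at hlast
    refine ⟨⟨?_, ?_⟩, hlast⟩
    · intro i hdi
      by_cases him : i < m
      · have hd' : letterAt (Fin.snoc w' Mark.dot : Fin (m+1) → Mark) i = Mark.dot := by
          rw [letterAt_snoc, if_pos him]; exact hdi
        obtain ⟨hi1, hc⟩ := h1 i hd'
        refine ⟨hi1, ?_⟩
        rwa [letterAt_snoc, if_pos (by omega)] at hc
      · rw [letterAt_ge w' (by omega)] at hdi; exact Mark.noConfusion hdi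
    · intro j hj hc
      have hj1 : j < m := by omega
      have hj2 : j + 1 < m := by omega
      have hc' : letterAt (Fin.snoc w' Mark.dot : Fin (m+1) → Mark) j = Mark.cross := by
        rw [letterAt_snoc, if_pos hj1]; exact hc
      have := h2 j (by omega) hc'
      rwa [letterAt_snoc, if_pos hj2] at this
  · rintro ⟨⟨h1, h2⟩, hlast⟩
    constructor
    · intro i hd
      rw [letterAt_snoc] at hd
      by_cases h : i < m
      · rw [if_pos h] at hd
        obtain ⟨hi1, hc⟩ := h1 i hd
        exact ⟨hi1, by rw [letterAt_snoc, if_pos (by omega)]; exact hc⟩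
      · rw [if_neg h] at hd
        by_cases h' : i = m
        · subst h'
          refine ⟨by omega, ?_⟩
          rw [letterAt_snoc, if_pos (by omega)]
          exact hlast
        · rw [if_neg h'] at hd; exact Mark.noConfusion hd
    · intro j hj hc
      rw [letterAt_snoc] at hc
      by_cases hjm : j ≤ m - 2
      · rw [if_pos (by omega)] at hc
        have := h2 j hjm hc
        rw [letterAt_snoc, if_pos (by omega)]
        exact this
      · have hje : j + 1 = m := by omega
        right
        rw [letterAt_snoc, if_neg (by omega), if_pos hje]

lemma isWt_snoc_blank {m : ℕ} (hm : 2 ≤ m) (w' : Fin m → Mark) :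
    IsWt (m+1) (Fin.snoc w' Mark.blank) ↔ IsWt m w' ∧ letterAt w' (m-1) ≠ Mark.cross := by
  constructor
  · rintro ⟨h1, h2⟩
    refine ⟨⟨?_, ?_⟩, ?_⟩
    · intro i hdi
      by_cases him : i < m
      · have hd' : letterAt (Fin.snoc w' Mark.blank : Fin (m+1) → Mark) i = Mark.dot := by
          rw [letterAt_snoc, if_pos him]; exact hdi
        obtain ⟨hi1, hc⟩ := h1 i hd'
        refine ⟨hi1, ?_⟩
        rwa [letterAt_snoc, if_pos (by omega)] at hc
      · rw [letterAt_ge w' (by omega)] at hdi; exact Mark.noConfusion hdi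
    · intro j hj hc
      have hj1 : j < m := by omega
      have hj2 : j + 1 < m := by omega
      have hc' : letterAt (Fin.snoc w' Mark.blank : Fin (m+1) → Mark) j = Mark.cross := by
        rw [letterAt_snoc, if_pos hj1]; exact hc
      have := h2 j (by omega) hc'
      rwa [letterAt_snoc, if_pos hj2] at this
    · intro hcon
      have hc' : letterAt (Fin.snoc w' Mark.blank : Fin (m+1) → Mark) (m-1) = Mark.cross := by
        rw [letterAt_snoc, if_pos (by omega)]; exact hcon
      have := h2 (m-1) (by omega) hc'
      rw [show m - 1 + 1 = m by omega, letterAt_snoc_last] at this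
      rcases this with h | h
      · exact Mark.noConfusion h
      · exact Mark.noConfusion h
  · rintro ⟨⟨h1, h2⟩, hlast⟩
    constructor
    · intro i hd
      rw [letterAt_snoc] at hd
      by_cases h : i < m
      · rw [if_pos h] at hd
        obtain ⟨hi1, hc⟩ := h1 i hd
        exact ⟨hi1, by rw [letterAt_snoc, if_pos (by omega)]; exact hc⟩
      · rw [if_neg h] at hd
        by_cases h' : i = m
        · rw [if_pos h'] at hd; exact Mark.noConfusion hd
        · rw [if_neg h'] at hd; exact Mark.noConfusion hd
    · intro j hj hc
      rw [letterAt_snoc] at hc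
      by_cases hjm : j ≤ m - 2
      · rw [if_pos (by omega)] at hc
        have := h2 j hjm hc
        rw [letterAt_snoc, if_pos (by omega)]
        exact this
      · have hje : j = m - 1 := by omega
        rw [if_pos (by omega)] at hc
        exact absurd (hje ▸ hc) hlast

open scoped Classical in
noncomputable def Fgen (n : ℕ) (S : Finset ℕ) : Polynomial ℤ :=
  ∑ w ∈ Finset.univ.filter (fun w : Fin n → Mark => IsWt n w ∧ DotSet n w = S),
    (X : Polynomial ℤ) ^ cro n w

open scoped Classical in
noncomputable def Ggen (n : ℕ) (S : Finset ℕ) : Polynomial ℤ :=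
  ∑ w ∈ Finset.univ.filter (fun w : Fin n → Mark =>
      (IsWt n w ∧ DotSet n w = S) ∧ letterAt w (n-1) = Mark.cross),
    (X : Polynomial ℤ) ^ cro n w

open scoped Classical in
noncomputable def Hgen (n : ℕ) (S : Finset ℕ) : Polynomial ℤ :=
  ∑ w ∈ Finset.univ.filter (fun w : Fin n → Mark =>
      (IsWt n w ∧ DotSet n w = S) ∧ ¬ letterAt w (n-1) = Mark.cross),
    (X : Polynomial ℤ) ^ cro n w

open scoped Classical

lemma F_eq_G_add_H (n : ℕ) (S : Finset ℕ) : Fgen n S = Ggen n S + Hgen n S := by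
  rw [Fgen, Ggen, Hgen,
    ← Finset.sum_filter_add_sum_filter_not
      (Finset.univ.filter (fun w : Fin n → Mark => IsWt n w ∧ DotSet n w = S))
      (fun w => letterAt w (n-1) = Mark.cross) (fun w => (X : Polynomial ℤ) ^ cro n w),
    Finset.filter_filter, Finset.filter_filter]

lemma DotSet_subset_range (n : ℕ) (w : Fin n → Mark) : DotSet n w ⊆ Finset.range n :=
  Finset.filter_subset _ _

lemma Fgen_zero_of_mem {n : ℕ} {S : Finset ℕ} (h : n ∈ S) : Fgen n S = 0 := by
  rw [Fgen]
  apply Finset.sum_eq_zero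
  intro w hw
  obtain ⟨_, hd⟩ := (Finset.mem_filter.1 hw).2
  exact absurd (Finset.mem_range.1 (DotSet_subset_range n w (hd ▸ h))) (lt_irrefl n)

lemma Ggen_zero_of_mem {n : ℕ} {S : Finset ℕ} (h : n ∈ S) : Ggen n S = 0 := by
  rw [Ggen]
  apply Finset.sum_eq_zero
  intro w hw
  obtain ⟨⟨_, hd⟩, _⟩ := (Finset.mem_filter.1 hw).2
  exact absurd (Finset.mem_range.1 (DotSet_subset_range n w (hd ▸ h))) (lt_irrefl n)

lemma Hgen_zero_of_mem {n : ℕ} {S : Finset ℕ} (h : n ∈ S) : Hgen n S = 0 := by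
  rw [Hgen]
  apply Finset.sum_eq_zero
  intro w hw
  obtain ⟨⟨_, hd⟩, _⟩ := (Finset.mem_filter.1 hw).2
  exact absurd (Finset.mem_range.1 (DotSet_subset_range n w (hd ▸ h))) (lt_irrefl n)

lemma Mark.univ_eq : (Finset.univ : Finset Mark) = {Mark.dot, Mark.cross, Mark.blank} := by
  decide

lemma sum_snoc {m : ℕ} (f : (Fin (m+1) → Mark) → Polynomial ℤ) :
    ∑ w : Fin (m+1) → Mark, f w =
      (∑ w' : Fin m → Mark, f (Fin.snoc w' Mark.dot)) +
      ((∑ w' : Fin m → Mark, f (Fin.snoc w' Mark.cross)) +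
      (∑ w' : Fin m → Mark, f (Fin.snoc w' Mark.blank))) := by
  rw [← Equiv.sum_comp (Fin.snocEquiv (fun _ => Mark)) f, Fintype.sum_prod_type]
  have he : ∀ (a : Mark) (w' : Fin m → Mark),
      f ((Fin.snocEquiv (fun _ => Mark)) (a, w')) = f (Fin.snoc w' a) := fun a w' => rfl
  simp only [he]
  rw [Mark.univ_eq, Finset.sum_insert (by decide), Finset.sum_insert (by decide),
    Finset.sum_singleton]

lemma Ggen_succ {m : ℕ} (hm : 2 ≤ m) (S : Finset ℕ) : Ggen (m+1) S = X * Fgen m S := by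
  rw [Ggen, Finset.sum_filter, sum_snoc, Fgen, Finset.sum_filter, Finset.mul_sum]
  have h1 : ∀ w' : Fin m → Mark,
      (if (IsWt (m+1) (Fin.snoc w' Mark.dot) ∧ DotSet (m+1) (Fin.snoc w' Mark.dot) = S) ∧
          letterAt (Fin.snoc w' Mark.dot : Fin (m+1) → Mark) (m+1-1) = Mark.cross
        then (X : Polynomial ℤ) ^ cro (m+1) (Fin.snoc w' Mark.dot) else 0) = 0 := by
    intro w'
    rw [if_neg]
    rintro ⟨-, hc⟩
    rw [show m+1-1 = m from rfl, letterAt_snoc_last] at hc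
    exact Mark.noConfusion hc
  have h3 : ∀ w' : Fin m → Mark,
      (if (IsWt (m+1) (Fin.snoc w' Mark.blank) ∧ DotSet (m+1) (Fin.snoc w' Mark.blank) = S) ∧
          letterAt (Fin.snoc w' Mark.blank : Fin (m+1) → Mark) (m+1-1) = Mark.cross
        then (X : Polynomial ℤ) ^ cro (m+1) (Fin.snoc w' Mark.blank) else 0) = 0 := by
    intro w'
    rw [if_neg]
    rintro ⟨-, hc⟩
    rw [show m+1-1 = m from rfl, letterAt_snoc_last] at hc
    exact Mark.noConfusion hc
  have h2 : ∀ w' : Fin m → Mark,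
      (if (IsWt (m+1) (Fin.snoc w' Mark.cross) ∧ DotSet (m+1) (Fin.snoc w' Mark.cross) = S) ∧
          letterAt (Fin.snoc w' Mark.cross : Fin (m+1) → Mark) (m+1-1) = Mark.cross
        then (X : Polynomial ℤ) ^ cro (m+1) (Fin.snoc w' Mark.cross) else 0) =
      X * (if IsWt m w' ∧ DotSet m w' = S then (X : Polynomial ℤ) ^ cro m w' else 0) := by
    intro w'
    rw [mul_ite, mul_zero]
    refine if_congr ?_ ?_ rfl
    · rw [show m+1-1 = m from rfl, letterAt_snoc_last]
      rw [isWt_snoc_cross hm, DotSet_snoc_of_ne w' (fun h => Mark.noConfusion h)]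
      simp only [and_true]
    · rw [cro_snoc_cross, pow_succ, mul_comm]
  simp only [h1, h2, h3]
  simp

lemma insert_dot_eq_iff {m : ℕ} (w' : Fin m → Mark) {S : Finset ℕ} (hmS : m ∈ S) :
    insert m (DotSet m w') = S ↔ DotSet m w' = S.erase m := by
  have hnm : m ∉ DotSet m w' := fun h =>
    absurd (Finset.mem_range.1 (DotSet_subset_range m w' h)) (lt_irrefl m)
  constructor
  · intro h; rw [← h, Finset.erase_insert hnm]
  · intro h; rw [h, Finset.insert_erase hmS]

lemma Fgen_succ {m : ℕ} (hm : 2 ≤ m) (S : Finset ℕ) :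
    Fgen (m+1) S = (if m ∈ S then Ggen m (S.erase m) else 0) + X * Fgen m S + Hgen m S := by
  rw [Fgen, Finset.sum_filter, sum_snoc]
  have h_cross : ∀ w' : Fin m → Mark,
      (if IsWt (m+1) (Fin.snoc w' Mark.cross) ∧ DotSet (m+1) (Fin.snoc w' Mark.cross) = S
        then (X : Polynomial ℤ) ^ cro (m+1) (Fin.snoc w' Mark.cross) else 0) =
      X * (if IsWt m w' ∧ DotSet m w' = S then (X : Polynomial ℤ) ^ cro m w' else 0) := by
    intro w'
    rw [mul_ite, mul_zero]
    refine if_congr ?_ ?_ rfl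
    · rw [isWt_snoc_cross hm, DotSet_snoc_of_ne w' (fun h => Mark.noConfusion h)]
    · rw [cro_snoc_cross, pow_succ, mul_comm]
  have h_blank : ∀ w' : Fin m → Mark,
      (if IsWt (m+1) (Fin.snoc w' Mark.blank) ∧ DotSet (m+1) (Fin.snoc w' Mark.blank) = S
        then (X : Polynomial ℤ) ^ cro (m+1) (Fin.snoc w' Mark.blank) else 0) =
      (if (IsWt m w' ∧ DotSet m w' = S) ∧ ¬ letterAt w' (m-1) = Mark.cross
        then (X : Polynomial ℤ) ^ cro m w' else 0) := by
    intro w'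
    refine if_congr ?_ ?_ rfl
    · rw [isWt_snoc_blank hm, DotSet_snoc_of_ne w' (fun h => Mark.noConfusion h)]
      tauto
    · rw [cro_snoc_of_ne w' (a := Mark.blank) (by decide)]
  by_cases hmS : m ∈ S
  · have h_dot : ∀ w' : Fin m → Mark,
        (if IsWt (m+1) (Fin.snoc w' Mark.dot) ∧ DotSet (m+1) (Fin.snoc w' Mark.dot) = S
          then (X : Polynomial ℤ) ^ cro (m+1) (Fin.snoc w' Mark.dot) else 0) =
        (if (IsWt m w' ∧ DotSet m w' = S.erase m) ∧ letterAt w' (m-1) = Mark.cross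
          then (X : Polynomial ℤ) ^ cro m w' else 0) := by
      intro w'
      refine if_congr ?_ ?_ rfl
      · rw [isWt_snoc_dot hm, DotSet_snoc_dot, insert_dot_eq_iff w' hmS]
        tauto
      · rw [cro_snoc_of_ne w' (a := Mark.dot) (by decide)]
    simp only [h_dot, h_cross, h_blank]
    rw [if_pos hmS, Ggen, Finset.sum_filter, Hgen, Finset.sum_filter, Fgen, Finset.sum_filter,
      Finset.mul_sum]
    ring
  · have h_dot : ∀ w' : Fin m → Mark,
        (if IsWt (m+1) (Fin.snoc w' Mark.dot) ∧ DotSet (m+1) (Fin.snoc w' Mark.dot) = S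
          then (X : Polynomial ℤ) ^ cro (m+1) (Fin.snoc w' Mark.dot) else 0) = 0 := by
      intro w'
      rw [if_neg]
      rintro ⟨-, hd⟩
      rw [DotSet_snoc_dot] at hd
      exact hmS (hd ▸ Finset.mem_insert_self m (DotSet m w'))
    simp only [h_dot, h_cross, h_blank]
    rw [if_neg hmS, Hgen, Finset.sum_filter, Fgen, Finset.sum_filter, Finset.mul_sum,
      Finset.sum_const_zero]
    ring

def IsWtB (n : ℕ) (w : Fin n → Mark) : Prop :=
  (∀ i < n, letterAt w i = Mark.dot → 1 ≤ i ∧ letterAt w (i - 1) = Mark.cross) ∧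
  (∀ j < n, j ≤ n - 2 → letterAt w j = Mark.cross →
    letterAt w (j + 1) = Mark.cross ∨ letterAt w (j + 1) = Mark.dot)

instance (n : ℕ) (w : Fin n → Mark) : Decidable (IsWtB n w) := by
  unfold IsWtB; infer_instance

lemma isWt_iff_isWtB {n : ℕ} (hn : 1 ≤ n) (w : Fin n → Mark) : IsWt n w ↔ IsWtB n w := by
  constructor
  · rintro ⟨h1, h2⟩
    exact ⟨fun i _ => h1 i, fun j _ hj => h2 j hj⟩
  · rintro ⟨h1, h2⟩
    constructor
    · intro i hd
      by_cases h : i < n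
      · exact h1 i h hd
      · rw [letterAt_ge w (by omega)] at hd; exact Mark.noConfusion hd
    · intro j hj hc
      exact h2 j (by omega) hj hc

lemma Fgen_two_filter (S : Finset ℕ) :
    Finset.univ.filter (fun w : Fin 2 → Mark => IsWt 2 w ∧ DotSet 2 w = S) =
    Finset.univ.filter (fun w : Fin 2 → Mark => IsWtB 2 w ∧ DotSet 2 w = S) :=
  Finset.filter_congr fun w _ => and_congr_left' (isWt_iff_isWtB one_le_two w)

lemma Ggen_two_filter (S : Finset ℕ) :
    Finset.univ.filter (fun w : Fin 2 → Mark =>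
      (IsWt 2 w ∧ DotSet 2 w = S) ∧ letterAt w (2-1) = Mark.cross) =
    Finset.univ.filter (fun w : Fin 2 → Mark =>
      (IsWtB 2 w ∧ DotSet 2 w = S) ∧ letterAt w (2-1) = Mark.cross) :=
  Finset.filter_congr fun w _ =>
    and_congr_left' (and_congr_left' (isWt_iff_isWtB one_le_two w))

lemma Fgen_two_empty : Fgen 2 (∅ : Finset ℕ) = qnum 3 := by
  rw [Fgen, Fgen_two_filter]
  have hf : Finset.univ.filter (fun w : Fin 2 → Mark => IsWtB 2 w ∧ DotSet 2 w = ∅) =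
      {![Mark.blank, Mark.blank], ![Mark.blank, Mark.cross], ![Mark.cross, Mark.cross]} := by
    decide
  rw [hf, Finset.sum_insert (by decide), Finset.sum_insert (by decide), Finset.sum_singleton]
  have c1 : cro 2 ![Mark.blank, Mark.blank] = 0 := by decide
  have c2 : cro 2 ![Mark.blank, Mark.cross] = 1 := by decide
  have c3 : cro 2 ![Mark.cross, Mark.cross] = 2 := by decide
  rw [c1, c2, c3]
  simp [qnum, Finset.sum_range_succ]
  ring

lemma Fgen_two_one : Fgen 2 ({1} : Finset ℕ) = X := by
  rw [Fgen, Fgen_two_filter]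
  have hf : Finset.univ.filter (fun w : Fin 2 → Mark => IsWtB 2 w ∧ DotSet 2 w = {1}) =
      {![Mark.cross, Mark.dot]} := by
    decide
  rw [hf, Finset.sum_singleton]
  have c1 : cro 2 ![Mark.cross, Mark.dot] = 1 := by decide
  rw [c1, pow_one]

lemma Ggen_two_empty : Ggen 2 (∅ : Finset ℕ) = X * qnum 2 := by
  rw [Ggen, Ggen_two_filter]
  have hf : Finset.univ.filter (fun w : Fin 2 → Mark =>
      (IsWtB 2 w ∧ DotSet 2 w = ∅) ∧ letterAt w (2-1) = Mark.cross) =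
      {![Mark.blank, Mark.cross], ![Mark.cross, Mark.cross]} := by
    decide
  rw [hf, Finset.sum_insert (by decide), Finset.sum_singleton]
  have c2 : cro 2 ![Mark.blank, Mark.cross] = 1 := by decide
  have c3 : cro 2 ![Mark.cross, Mark.cross] = 2 := by decide
  rw [c2, c3, qnum_two]
  ring

lemma Ggen_two_one : Ggen 2 ({1} : Finset ℕ) = 0 := by
  rw [Ggen, Ggen_two_filter]
  have hf : Finset.univ.filter (fun w : Fin 2 → Mark =>
      (IsWtB 2 w ∧ DotSet 2 w = {1}) ∧ letterAt w (2-1) = Mark.cross) = ∅ := by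
    decide
  rw [hf, Finset.sum_empty]

lemma psi_two_one : psi 2 ({1} : Finset ℕ) = X := by
  rw [psi, if_pos ⟨by decide, by decide⟩, if_neg (by decide),
    if_pos (show 2-1 ∈ ({1} : Finset ℕ) by decide), Finset.card_singleton,
    Finset.sort_singleton, show psiProd [1] = qnum 1 * 1 from rfl, qnum_one]
  ring

noncomputable def psiG (m : ℕ) (S : Finset ℕ) : Polynomial ℤ :=
  if m - 1 ∈ S then 0 else X * psi (m-1) S

lemma main_ind : ∀ m : ℕ, 2 ≤ m → ∀ S : Finset ℕ, S ⊆ Finset.Icc 1 (m-1) →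
    Fgen m S = psi m S ∧ Ggen m S = psiG m S := by
  intro m hm
  induction m, hm using Nat.le_induction with
  | base =>
    intro S hS
    have hcase : S = ∅ ∨ S = {1} := Finset.subset_singleton_iff.1 (by simpa using hS)
    rcases hcase with rfl | rfl
    · constructor
      · rw [Fgen_two_empty, psi_empty]
      · rw [Ggen_two_empty, psiG, if_neg (Finset.notMem_empty _), psi_empty]
    · constructor
      · rw [Fgen_two_one, psi_two_one]
      · rw [Ggen_two_one, psiG, if_pos (show 2-1 ∈ ({1} : Finset ℕ) by decide)]
  | succ m hm ih =>
    intro S hS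
    have hSm : S ⊆ Finset.Icc 1 m := hS
    constructor
    · rw [Fgen_succ hm]
      by_cases hmS : m ∈ S
      · rw [if_pos hmS, Fgen_zero_of_mem hmS, Hgen_zero_of_mem hmS]
        have hsub' : S.erase m ⊆ Finset.Icc 1 (m-1) := fun x hx => by
          have hx' := Finset.mem_erase.1 hx
          have := Finset.mem_Icc.1 (hSm hx'.2)
          rw [Finset.mem_Icc]; omega
        rw [(ih _ hsub').2, psiG]
        by_cases hm1 : m - 1 ∈ S
        · rw [if_pos (Finset.mem_erase.2 ⟨by omega, hm1⟩)]
          have hnst : ¬ NoTwoConsec S := fun h =>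
            h (m-1) hm1 (by rw [show m-1+1 = m by omega]; exact hmS)
          rw [psi_of_not (fun hh => hnst hh.2)]
          ring
        · rw [if_neg (fun h => hm1 (Finset.mem_erase.1 h).2), psi_rec3 hm hmS hSm hm1]
          ring
      · rw [if_neg hmS]
        have hSm1 : S ⊆ Finset.Icc 1 (m-1) := fun x hx => by
          have h1 := Finset.mem_Icc.1 (hSm hx)
          have h2 : x ≠ m := fun e => hmS (e ▸ hx)
          rw [Finset.mem_Icc]; omega
        obtain ⟨hF, hG⟩ := ih S hSm1
        have hH : Hgen m S = Fgen m S - Ggen m S := by rw [F_eq_G_add_H m S]; ring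
        rw [hH, hF, hG, psiG]
        by_cases hm1 : m - 1 ∈ S
        · rw [if_pos hm1, psi_rec2 hm hm1 hSm1]
          ring
        · rw [if_neg hm1]
          have hsub2 : S ⊆ Finset.Icc 1 (m-2) := fun x hx => by
            have h1 := Finset.mem_Icc.1 (hSm1 hx)
            have h2 : x ≠ m - 1 := fun e => hm1 (e ▸ hx)
            rw [Finset.mem_Icc]; omega
          rw [psi_rec1 hm hsub2]
          ring
    · rw [Ggen_succ hm, psiG, show m+1-1 = m from rfl]
      by_cases hmS : m ∈ S
      · rw [if_pos hmS, Fgen_zero_of_mem hmS, mul_zero]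
      · have hSm1 : S ⊆ Finset.Icc 1 (m-1) := fun x hx => by
          have h1 := Finset.mem_Icc.1 (hSm hx)
          have h2 : x ≠ m := fun e => hmS (e ▸ hx)
          rw [Finset.mem_Icc]; omega
        rw [if_neg hmS, (ih S hSm1).1]
end Aux

open scoped Classical in
/-- For `n ≥ 2` and `S ⊆ [1, n-1]`:
`∑_{w ∈ W̃_n, Dot(w) = S} t^{cro(w)} = ψ_{S,n}(t)`. -/
theorem Wt_genfun_eq_psi (n : ℕ) (hn : 2 ≤ n) (S : Finset ℕ)
    (hS : S ⊆ Finset.Icc 1 (n - 1)) :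
    ∑ w ∈ Finset.univ.filter (fun w : Fin n → Mark => IsWt n w ∧ DotSet n w = S),
      (X : Polynomial ℤ) ^ cro n w = psi n S :=
  (main_ind n hn S hS).1
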